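/- Let R be a commutative semiring, ι a finite index set with finite nonempty domains X i, and T a finite rooted tree with vertex set V and cluster map C : V → Finset ι satisfying: (i) ⋃_{v ∈ V} C v = ι, and (ii) the running intersection property: for all u, w ∈ V and every v on the unique path between u and w in T, C u ∩ C w ⊆ C v. Let ψ_v : (∀ i ∈ C v, X i) → R for each v ∈ V. Define, bottom-up, for each non-root vertex v with parent p and separator S_v = C v ∩ C p, the message m_v : (∀ i ∈ S_v, X i) → R by m_v(s) = ∑_{c : ∀ i ∈ C v, X i, c compatible with s} ψ_v(c) * ∏_{children u of v} m_u(c restricted to S_u), and let Z = ∑_{c : ∀ i ∈ C r, X i} ψ_r(c) * ∏_{children u of r} m_u(c restricted to S_u), where r is the root. Then Z = ∑_{x : ∀ i, X i} ∏_{v ∈ V} ψ_v (x restricted to C v). -/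

import Mathlib

set_option linter.unusedSectionVars false
set_option maxHeartbeats 1000000


open Finset

section JunctionTree

variable {V : Type} [Fintype V] [DecidableEq V]
variable {ι : Type} [Fintype ι] [DecidableEq ι]
variable {X : ι → Type} [∀ i, Fintype (X i)] [∀ i, DecidableEq (X i)] [∀ i, Nonempty (X i)]
variable {R : Type} [CommSemiring R]

/-- The undirected tree on the vertex set `V` determined by a parent map. -/
def treeGraph (par : V → V) : SimpleGraph V where
  Adj u w := u ≠ w ∧ (par u = w ∨ par w = u)
  symm := by
    constructor
    intro u w h
    exact ⟨h.1.symm, h.2.symm⟩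
  loopless := by
    constructor
    intro u h
    exact h.1 rfl

/-- The children of a vertex `v` in the rooted tree with root `r` and parent map `par`. -/
def children (par : V → V) (r v : V) : Finset V :=
  Finset.univ.filter fun u => par u = v ∧ u ≠ r

/-- The bottom-up message `m_v` sent by a non-root vertex `v` to its parent: a
function of an assignment `s` to the separator `S_v = C v ∩ C (par v)`, equal to
the sum, over assignments `c` to the cluster `C v` compatible with `s`, of
`ψ v c` times the product of the children's messages at the restrictions of `c`
to their separators.  The auxiliary fuel argument (instantiated with
`Fintype.card V`, a bound on the height of the tree) drives the recursion. -/
def msg (par : V → V) (r : V) (C : V → Finset ι)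
    (ψ : (v : V) → ((i : ↥(C v)) → X i.1) → R) :
    ℕ → (v : V) → ((i : ↥(C v ∩ C (par v))) → X i.1) → R
  | 0, _, _ => 0
  | fuel + 1, v, s =>
    ∑ c : (i : ↥(C v)) → X i.1,
      if (∀ i : ↥(C v ∩ C (par v)), c ⟨i.1, Finset.mem_of_mem_inter_left i.2⟩ = s i) then
        ψ v c *
          ∏ u ∈ (children par r v).attach,
            msg par r C ψ fuel u.1 (fun i =>
              c ⟨i.1, by
                have hu : par u.1 = v := (Finset.mem_filter.mp u.2).2.1
                exact (congrArg C hu) ▸ (Finset.mem_of_mem_inter_right i.2)⟩)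
      else 0

/-- The quantity `Z` computed at the root `r`: the sum over assignments `c` to
the root cluster of `ψ r c` times the product of the root's children's messages. -/
def rootSum (par : V → V) (r : V) (C : V → Finset ι)
    (ψ : (v : V) → ((i : ↥(C v)) → X i.1) → R) : R :=
  ∑ c : (i : ↥(C r)) → X i.1,
    ψ r c *
      ∏ u ∈ (children par r r).attach,
        msg par r C ψ (Fintype.card V) u.1 (fun i =>
          c ⟨i.1, by
            have hu : par u.1 = r := (Finset.mem_filter.mp u.2).2.1
            exact (congrArg C hu) ▸ (Finset.mem_of_mem_inter_right i.2)⟩)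

namespace JT

def subtree (par : V → V) (v : V) : Finset V :=
  Finset.univ.filter fun u => ∃ k : Fin (Fintype.card V + 1), par^[k.1] u = v

variable {par : V → V} {r : V} {depth : V → ℕ}

lemma exists_le_card {x v : V} (h : ∃ k, par^[k] x = v) :
    ∃ k ≤ Fintype.card V, par^[k] x = v := by
  classical
  let k := Nat.find h
  have hk : par^[k] x = v := Nat.find_spec h
  have hmin : ∀ j < k, par^[j] x ≠ v := fun j hj => Nat.find_min h hj
  have key : ∀ j j' : ℕ, j < j' → j' ≤ k → par^[j] x ≠ par^[j'] x := by
    intro j j' hjj' hj'k heq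
    have h1 : par^[(k - j') + j] x = v := by
      have e1 : par^[(k - j') + j] x = par^[k - j'] (par^[j] x) :=
        Function.iterate_add_apply par (k - j') j x
      have e2 : par^[(k - j') + j'] x = par^[k - j'] (par^[j'] x) :=
        Function.iterate_add_apply par (k - j') j' x
      rw [e1, heq, ← e2]
      have : k - j' + j' = k := by omega
      rw [this, hk]
    exact hmin _ (by omega) h1
  have hinj : Function.Injective (fun j : Fin (k + 1) => par^[j.1] x) := by
    intro a b hab
    by_contra hne
    rcases lt_or_gt_of_ne (fun h' : a.1 = b.1 => hne (Fin.ext h')) with h' | h'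
    · exact key a.1 b.1 h' (by omega) hab
    · exact key b.1 a.1 h' (by omega) hab.symm
  have := Fintype.card_le_of_injective _ hinj
  rw [Fintype.card_fin] at this
  exact ⟨k, by omega, hk⟩

lemma mem_subtree_iff {u v : V} : u ∈ subtree par v ↔ ∃ k, par^[k] u = v := by
  simp only [subtree, mem_filter, mem_univ, true_and]
  constructor
  · rintro ⟨k, hk⟩; exact ⟨k.1, hk⟩
  · intro h
    obtain ⟨k, hk, h'⟩ := exists_le_card h
    exact ⟨⟨k, by omega⟩, h'⟩

lemma subtree_self (v : V) : v ∈ subtree par v :=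
  mem_subtree_iff.mpr ⟨0, rfl⟩

lemma mem_children_iff {u v : V} : u ∈ children par r v ↔ par u = v ∧ u ≠ r := by
  simp [children]

lemma child_subtree {u v : V} (hu : u ∈ children par r v) :
    subtree par u ⊆ subtree par v := by
  intro w hw
  rw [mem_subtree_iff] at hw ⊢
  obtain ⟨k, hk⟩ := hw
  refine ⟨k + 1, ?_⟩
  rw [Function.iterate_succ_apply', hk, (mem_children_iff.mp hu).1]

section WithDepth

variable (hroot : par r = r) (hdepth : ∀ v : V, v ≠ r → depth (par v) < depth v)
include hroot hdepth

lemma depth_iter_le (k : ℕ) (x : V) : depth (par^[k] x) ≤ depth x := by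
  induction k with
  | zero => simp
  | succ k ih =>
    rw [Function.iterate_succ_apply']
    by_cases h : par^[k] x = r
    · rw [h, hroot, ← h]; exact ih
    · exact le_trans (le_of_lt (hdepth _ h)) ih

lemma reach_root (u : V) : ∃ k, par^[k] u = r := by
  have H : ∀ n u, depth u ≤ n → ∃ k, par^[k] u = r := by
    intro n
    induction n with
    | zero =>
      intro u hu
      by_cases h : u = r
      · exact ⟨0, h⟩
      · exact absurd (hdepth u h) (by omega)
    | succ n ih =>
      intro u hu
      by_cases h : u = r
      · exact ⟨0, h⟩
      · obtain ⟨k, hk⟩ := ih (par u) (by have := hdepth u h; omega)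
        exact ⟨k + 1, by rw [Function.iterate_succ_apply]; exact hk⟩
  exact H (depth u) u le_rfl

lemma subtree_root : subtree par r = (Finset.univ : Finset V) := by
  apply Finset.eq_univ_of_forall
  intro u
  exact mem_subtree_iff.mpr (reach_root hroot hdepth u)

lemma not_mem_subtree_child {u v : V} (hu : u ∈ children par r v) :
    v ∉ subtree par u := by
  obtain ⟨hpar, hne⟩ := mem_children_iff.mp hu
  rw [mem_subtree_iff]
  rintro ⟨k, hk⟩
  have h1 : depth (par^[k] v) ≤ depth v := depth_iter_le hroot hdepth k v
  have h2 : depth v < depth u := by have := hdepth u hne; rwa [hpar] at this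
  rw [hk] at h1; omega

lemma subtree_disj {u u' v : V} (hu : u ∈ children par r v) (hu' : u' ∈ children par r v)
    (hne : u ≠ u') : Disjoint (subtree par u) (subtree par u') := by
  have key : ∀ a b : V, a ∈ children par r v → b ∈ children par r v → a ≠ b →
      ∀ w k j, par^[k] w = a → par^[j] w = b → k ≤ j → False := by
    intro a b ha hb hab w k j hk hj hkj
    have hb' : par^[j - k + k] w = b := by rwa [show j - k + k = j by omega]
    rw [Function.iterate_add_apply, hk] at hb'
    rcases Nat.eq_zero_or_pos (j - k) with h0 | hpos
    · rw [h0] at hb'; exact hab hb'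
    · obtain ⟨t, ht⟩ : ∃ t, j - k = t + 1 := ⟨j - k - 1, by omega⟩
      rw [ht, Function.iterate_succ_apply, (mem_children_iff.mp ha).1] at hb'
      have h1 : depth (par^[t] v) ≤ depth v := depth_iter_le hroot hdepth t v
      have h2 : depth v < depth b := by
        have := hdepth b (mem_children_iff.mp hb).2
        rwa [(mem_children_iff.mp hb).1] at this
      rw [hb'] at h1; omega
  rw [Finset.disjoint_left]
  intro w hw hw'
  obtain ⟨k, hk⟩ := mem_subtree_iff.mp hw
  obtain ⟨j, hj⟩ := mem_subtree_iff.mp hw'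
  rcases le_total k j with h | h
  · exact key u u' hu hu' hne w k j hk hj h
  · exact key u' u hu' hu hne.symm w j k hj hk h

lemma subtree_cases {w v : V} (hw : w ∈ subtree par v) :
    w = v ∨ ∃ u ∈ children par r v, w ∈ subtree par u := by
  classical
  have h := mem_subtree_iff.mp hw
  set k := Nat.find h with hkdef
  have hk : par^[k] w = v := Nat.find_spec h
  rcases Nat.eq_zero_or_pos k with h0 | hpos
  · left; rw [h0] at hk; exact hk
  · right
    obtain ⟨t, ht⟩ : ∃ t, k = t + 1 := ⟨k - 1, by omega⟩
    refine ⟨par^[t] w, ?_, mem_subtree_iff.mpr ⟨t, rfl⟩⟩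
    rw [mem_children_iff]
    have e : par^[t + 1] w = par (par^[t] w) := Function.iterate_succ_apply' par t w
    constructor
    · rw [← e, ← ht, hk]
    · intro hr
      have hvr : v = r := by
        rw [ht] at hk; rw [hk] at e; rw [hr, hroot] at e; exact e
      exact Nat.find_min h (show t < Nat.find h by rw [← hkdef]; omega)
        (show par^[t] w = v by rw [hr, hvr])


lemma exists_chain_path (k : ℕ) (x : V) (hx : ∀ j < k, par^[j] x ≠ r) :
    ∃ p : (treeGraph par).Walk x (par^[k] x), p.IsPath ∧
      ∀ y, y ∈ p.support ↔ ∃ j ≤ k, par^[j] x = y := by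
  induction k generalizing x with
  | zero =>
    show ∃ p : (treeGraph par).Walk x x, p.IsPath ∧ ∀ y, y ∈ p.support ↔ ∃ j ≤ 0, par^[j] x = y
    refine ⟨SimpleGraph.Walk.nil, SimpleGraph.Walk.IsPath.nil, ?_⟩
    intro y
    simp only [SimpleGraph.Walk.support_nil, List.mem_singleton]
    constructor
    · rintro rfl; exact ⟨0, le_rfl, rfl⟩
    · rintro ⟨j, hj, hy⟩
      rw [Nat.le_zero] at hj; subst hj; exact hy.symm
  | succ k ih =>
    have hxr : x ≠ r := by have := hx 0 (Nat.succ_pos k); simpa using this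
    have hne : x ≠ par x := by
      intro h
      have := hdepth x hxr
      rw [← h] at this; omega
    have hadj : (treeGraph par).Adj x (par x) := ⟨hne, Or.inl rfl⟩
    obtain ⟨q, hq, hsup⟩ := ih (par x) (fun j hj => hx (j + 1) (by omega))
    show ∃ p : (treeGraph par).Walk x (par^[k] (par x)), p.IsPath ∧
      ∀ y, y ∈ p.support ↔ ∃ j ≤ k + 1, par^[j] x = y
    refine ⟨SimpleGraph.Walk.cons hadj q, ?_, ?_⟩
    · rw [SimpleGraph.Walk.cons_isPath_iff]
      refine ⟨hq, fun hmem => ?_⟩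
      obtain ⟨j, hj, hy⟩ := (hsup x).mp hmem
      have h1 : depth (par^[j] (par x)) ≤ depth (par x) := depth_iter_le hroot hdepth j (par x)
      have h2 := hdepth x hxr
      rw [hy] at h1; omega
    · intro y
      rw [SimpleGraph.Walk.support_cons, List.mem_cons, hsup y]
      constructor
      · rintro (rfl | ⟨j, hj, hy⟩)
        · exact ⟨0, by omega, rfl⟩
        · exact ⟨j + 1, by omega, by rw [Function.iterate_succ_apply]; exact hy⟩
      · rintro ⟨j, hj, hy⟩
        cases j with
        | zero => left; exact hy.symm
        | succ j =>
          right
          rw [Function.iterate_succ_apply] at hy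
          exact ⟨j, by omega, hy⟩

lemma subtree_path {u v w : V} (hu : u ∈ children par r v) (hw : w ∈ subtree par u) :
    ∃ p : (treeGraph par).Walk w v, p.IsPath ∧ u ∈ p.support ∧
      ∀ y ∈ p.support, y ∈ subtree par u ∨ y = v := by
  obtain ⟨hpar, hur⟩ := mem_children_iff.mp hu
  obtain ⟨k, hk⟩ := mem_subtree_iff.mp hw
  have hkr : ∀ j < k + 1, par^[j] w ≠ r := by
    intro j hj hr
    have hj' : j ≤ k := by omega
    have hthis : par^[k] w = r := by
      have e : par^[k - j + j] w = par^[k - j] (par^[j] w) :=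
        Function.iterate_add_apply par (k - j) j w
      rw [show k - j + j = k by omega] at e
      rw [e, hr]
      exact Function.iterate_fixed hroot (k - j)
    rw [hk] at hthis
    exact hur hthis
  obtain ⟨p0, hp0, hsup⟩ := exists_chain_path hroot hdepth (k + 1) w hkr
  have hend : par^[k + 1] w = v := by
    rw [Function.iterate_succ_apply', hk, hpar]
  refine ⟨p0.copy rfl hend, ?_, ?_, ?_⟩
  · rwa [SimpleGraph.Walk.isPath_copy]
  · rw [SimpleGraph.Walk.support_copy]
    exact (hsup u).mpr ⟨k, by omega, hk⟩
  · intro y hy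
    rw [SimpleGraph.Walk.support_copy] at hy
    obtain ⟨j, hj, hy'⟩ := (hsup y).mp hy
    by_cases hjk : j ≤ k
    · left
      rw [mem_subtree_iff]
      refine ⟨k - j, ?_⟩
      rw [← hy', ← Function.iterate_add_apply, show k - j + j = k by omega]
      exact hk
    · right
      have : j = k + 1 := by omega
      subst this
      rw [← hy']
      exact hend

lemma rip_child {C : V → Finset ι}
    (hrip : ∀ a b : V, ∀ p : (treeGraph par).Walk a b, p.IsPath →
      ∀ c ∈ p.support, C a ∩ C b ⊆ C c)
    {u v w : V} (hu : u ∈ children par r v) (hw : w ∈ subtree par u) :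
    C w ∩ C v ⊆ C u := by
  obtain ⟨p, hp, hup, _⟩ := subtree_path hroot hdepth hu hw
  exact hrip w v p hp u hup

lemma rip_sep {C : V → Finset ι}
    (hrip : ∀ a b : V, ∀ p : (treeGraph par).Walk a b, p.IsPath →
      ∀ c ∈ p.support, C a ∩ C b ⊆ C c)
    {u u' v w w' : V} (hu : u ∈ children par r v) (hu' : u' ∈ children par r v)
    (hne : u ≠ u') (hw : w ∈ subtree par u) (hw' : w' ∈ subtree par u') :
    C w ∩ C w' ⊆ C u ∩ C v := by
  obtain ⟨p1, hp1, hu1, hcl1⟩ := subtree_path hroot hdepth hu hw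
  obtain ⟨p2, hp2, hu2, hcl2⟩ := subtree_path hroot hdepth hu' hw'
  have hdisj : ∀ y, y ∈ p1.support → y ∈ p2.support → y = v := by
    intro y h1 h2
    rcases hcl1 y h1 with hy1 | rfl
    · rcases hcl2 y h2 with hy2 | rfl
      · exact absurd hy2
          (Finset.disjoint_left.mp (subtree_disj hroot hdepth hu hu' hne) hy1)
      · rfl
    · rfl
  have hpath : (p1.append p2.reverse).IsPath := by
    rw [SimpleGraph.Walk.isPath_def, SimpleGraph.Walk.support_append]
    apply List.Nodup.append
    · exact hp1.support_nodup
    · exact hp2.reverse.support_nodup.tail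
    · intro y hy1 hy2
      have hy2' : y ∈ p2.reverse.support := List.mem_of_mem_tail hy2
      rw [SimpleGraph.Walk.support_reverse, List.mem_reverse] at hy2'
      have hyv := hdisj y hy1 hy2'
      subst hyv
      have hn := hp2.reverse.support_nodup
      rw [SimpleGraph.Walk.support_eq_cons] at hn
      exact (List.nodup_cons.mp hn).1 hy2
  have humem : u ∈ (p1.append p2.reverse).support := by
    rw [SimpleGraph.Walk.mem_support_append_iff]
    exact Or.inl hu1
  have hvmem : v ∈ (p1.append p2.reverse).support := by
    rw [SimpleGraph.Walk.mem_support_append_iff]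
    right
    exact p2.reverse.start_mem_support
  exact Finset.subset_inter (hrip w w' _ hpath u humem) (hrip w w' _ hpath v hvmem)

end WithDepth


section Asg

lemma ite_swap {P Q : Prop} [Decidable P] [Decidable Q] (x : R) :
    (if P then (if Q then x else 0) else 0) = if Q then (if P then x else 0) else 0 := by
  split_ifs <;> rfl

variable (X) in
noncomputable def restr (A B : Finset ι) (y : (i : ↥A) → X i.1) : (i : ↥B) → X i.1 :=
  fun i => if h : i.1 ∈ A then y ⟨i.1, h⟩ else Classical.arbitrary _

lemma restr_restr {A B B' : Finset ι} (hB : B ⊆ A) (hB' : B' ⊆ B)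
    (y : (i : ↥A) → X i.1) : restr X B B' (restr X A B y) = restr X A B' y := by
  funext i
  have h1 : i.1 ∈ B := hB' i.2
  have h2 : i.1 ∈ A := hB h1
  simp [restr, h1, h2]

lemma restr_self (A : Finset ι) (y : (i : ↥A) → X i.1) : restr X A A y = y := by
  funext i
  exact dif_pos i.2

variable (X) in
noncomputable def glue (A B T : Finset ι) (a : (i : ↥A) → X i.1) (b : (i : ↥B) → X i.1) :
    (i : ↥T) → X i.1 :=
  fun i => if h : i.1 ∈ A then a ⟨i.1, h⟩
    else if h' : i.1 ∈ B then b ⟨i.1, h'⟩ else Classical.arbitrary _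

variable (X) in
def compat {A B : Finset ι} (a : (i : ↥A) → X i.1) (b : (i : ↥B) → X i.1) : Prop :=
  ∀ (i : ι) (hA : i ∈ A) (hB : i ∈ B), a ⟨i, hA⟩ = b ⟨i, hB⟩

instance {A B : Finset ι} (a : (i : ↥A) → X i.1) (b : (i : ↥B) → X i.1) :
    Decidable (compat X a b) :=
  decidable_of_iff (∀ i : ↥(A ∩ B), a ⟨i.1, (Finset.mem_inter.mp i.2).1⟩ =
      b ⟨i.1, (Finset.mem_inter.mp i.2).2⟩) (by
    constructor
    · intro h i hA hB
      exact h ⟨i, Finset.mem_inter.mpr ⟨hA, hB⟩⟩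
    · intro h i
      exact h i.1 _ _)

lemma restr_glue_left {A B T W : Finset ι} (hWA : W ⊆ A) (hWT : W ⊆ T)
    (a : (i : ↥A) → X i.1) (b : (i : ↥B) → X i.1) :
    restr X T W (glue X A B T a b) = restr X A W a := by
  funext i
  have hA := hWA i.2
  have hT := hWT i.2
  simp [restr, glue, hA, hT]

lemma restr_glue_right {A B T W : Finset ι} (hWB : W ⊆ B) (hWT : W ⊆ T)
    {a : (i : ↥A) → X i.1} {b : (i : ↥B) → X i.1} (hc : compat X a b) :
    restr X T W (glue X A B T a b) = restr X B W b := by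
  funext i
  have hB := hWB i.2
  have hT := hWT i.2
  by_cases hA : i.1 ∈ A
  · simp only [restr, glue, dif_pos hT, dif_pos hA, dif_pos hB]
    exact hc i.1 hA hB
  · simp [restr, glue, hA, hB, hT]

lemma sum_glue {A B T : Finset ι} (hAT : A ⊆ T) (hBT : B ⊆ T)
    (hT : ∀ i ∈ T, i ∈ A ∨ i ∈ B) (f : ((i : ↥T) → X i.1) → R) :
    ∑ y : (i : ↥T) → X i.1, f y =
      ∑ a : (i : ↥A) → X i.1, ∑ b : (i : ↥B) → X i.1,
        if compat X a b then f (glue X A B T a b) else 0 := by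
  classical
  rw [← Fintype.sum_prod_type']
  rw [Finset.sum_ite, Finset.sum_const_zero, add_zero]
  apply Finset.sum_nbij' (i := fun y => (restr X T A y, restr X T B y))
    (j := fun p => glue X A B T p.1 p.2)
  · intro y _
    rw [Finset.mem_filter]
    refine ⟨Finset.mem_univ _, fun i hA hB => ?_⟩
    simp [restr, hAT hA, hBT hB]
  · intro p _
    exact Finset.mem_univ _
  · intro y _
    funext i
    by_cases hA : i.1 ∈ A
    · simp [glue, restr, hA, hAT hA]
    · have hB : i.1 ∈ B := (hT i.1 i.2).resolve_left hA
      simp [glue, restr, hA, hB, hBT hB]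
  · intro p hp
    have hc := (Finset.mem_filter.mp hp).2
    rcases p with ⟨a, b⟩
    simp only [Prod.mk.injEq]
    constructor
    · rw [restr_glue_left (le_refl A) hAT, restr_self]
    · rw [restr_glue_right (le_refl B) hBT hc, restr_self]
  · intro y _
    congr 1
    funext i
    by_cases hA : i.1 ∈ A
    · simp [glue, restr, hA, hAT hA]
    · have hB : i.1 ∈ B := (hT i.1 i.2).resolve_left hA
      simp [glue, restr, hA, hB, hBT hB]

lemma sum_restr_eq {A B : Finset ι} (hBA : B ⊆ A) (hAB : A ⊆ B)
    (c : (i : ↥B) → X i.1) (g : ((i : ↥B) → X i.1) → R) :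
    (∑ y : (i : ↥A) → X i.1, if restr X A B y = c then g (restr X A B y) else 0) = g c := by
  classical
  have e1 : ∀ z : (i : ↥B) → X i.1, restr X A B (restr X B A z) = z := by
    intro z
    rw [restr_restr hAB hBA, restr_self]
  have he : Function.Bijective (fun z : (i : ↥B) → X i.1 => restr X B A z) := by
    constructor
    · intro z z' h
      have h1 := congrArg (restr X A B) h
      rwa [e1, e1] at h1
    · intro y
      refine ⟨restr X A B y, ?_⟩
      show restr X B A (restr X A B y) = y
      rw [restr_restr hBA hAB, restr_self]
  rw [← Fintype.sum_bijective _ he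
    (fun z : (i : ↥B) → X i.1 => if z = c then g z else 0)
    (fun y : (i : ↥A) → X i.1 => if restr X A B y = c then g (restr X A B y) else 0)
    (fun z => by simp only [e1])]
  simp only [Fintype.sum_ite_eq']

lemma sum_asg (A : Finset ι) (hA : ∀ i, i ∈ A) (f : ((i : ↥A) → X i.1) → R) :
    ∑ y : (i : ↥A) → X i.1, f y = ∑ x : (i : ι) → X i, f (fun i => x i.1) := by
  have he : Function.Bijective
      (fun (x : (i : ι) → X i) => (fun i => x i.1 : (i : ↥A) → X i.1)) := by
    constructor
    · intro x x' h
      funext i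
      exact congrFun h ⟨i, hA i⟩
    · intro y
      exact ⟨fun i => y ⟨i, hA i⟩, rfl⟩
  exact (Fintype.sum_bijective _ he (fun x => f (fun i => x i.1)) f (fun x => rfl)).symm

end Asg

def scopeJT (par : V → V) (C : V → Finset ι) (v : V) : Finset ι :=
  (subtree par v).biUnion C

noncomputable def TT (par : V → V) (C : V → Finset ι)
    (ψ : (v : V) → ((i : ↥(C v)) → X i.1) → R)
    (v : V) (s : (i : ↥(C v ∩ C (par v))) → X i.1) : R :=
  ∑ y : (i : ↥(scopeJT par C v)) → X i.1,
    if restr X (scopeJT par C v) (C v ∩ C (par v)) y = s then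
      ∏ w ∈ subtree par v, ψ w (restr X (scopeJT par C v) (C w) y)
    else 0


section Central

variable (hroot : par r = r) (hdepth : ∀ v : V, v ≠ r → depth (par v) < depth v)
include hroot hdepth

lemma central {C : V → Finset ι}
    (hrip : ∀ a b : V, ∀ p : (treeGraph par).Walk a b, p.IsPath →
      ∀ c ∈ p.support, C a ∩ C b ⊆ C c)
    (ψ : (v : V) → ((i : ↥(C v)) → X i.1) → R) (v : V) :
    ∀ W : Finset V, W ⊆ children par r v →
      ∀ A : Finset ι, C v ⊆ A → (∀ u ∈ W, scopeJT par C u ⊆ A) →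
        (∀ i ∈ A, i ∈ C v ∨ i ∈ W.biUnion (scopeJT par C)) →
        ∀ c : (i : ↥(C v)) → X i.1,
          (∑ y : (i : ↥A) → X i.1,
            if restr X A (C v) y = c then
              ∏ w ∈ insert v (W.biUnion (subtree par)), ψ w (restr X A (C w) y)
            else 0)
          = ψ v c * ∏ u ∈ W, TT par C ψ u (restr X (C v) (C u ∩ C (par u)) c) := by
  classical
  intro W
  induction W using Finset.induction_on with
  | empty =>
    intro _ A hCvA _ hAsub c
    have hACv : A ⊆ C v := by
      intro i hi
      rcases hAsub i hi with h | h
      · exact h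
      · simp at h
    simp only [Finset.biUnion_empty, Finset.prod_empty, mul_one]
    have : (insert v (∅ : Finset V)) = {v} := rfl
    rw [this]
    calc (∑ y : (i : ↥A) → X i.1,
            if restr X A (C v) y = c then ∏ w ∈ ({v} : Finset V), ψ w (restr X A (C w) y)
            else 0)
        = ∑ y : (i : ↥A) → X i.1,
            if restr X A (C v) y = c then ψ v (restr X A (C v) y) else 0 := by
          apply Finset.sum_congr rfl
          intro y _
          rw [Finset.prod_singleton]
      _ = ψ v c := sum_restr_eq hCvA hACv c (ψ v)
  | @insert u₀ W hu₀ ih =>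
    intro hsub A hCvA hUA hAsub c
    have hu₀c : u₀ ∈ children par r v := hsub (Finset.mem_insert_self _ _)
    have hWc : W ⊆ children par r v := fun x hx => hsub (Finset.mem_insert_of_mem hx)
    have hpar0 : par u₀ = v := (mem_children_iff.mp hu₀c).1
    set A' := C v ∪ W.biUnion (scopeJT par C) with hA'def
    set B := scopeJT par C u₀ with hBdef
    set S := C u₀ ∩ C (par u₀) with hSdef
    have hA'A : A' ⊆ A :=
      Finset.union_subset hCvA (Finset.biUnion_subset.mpr
        (fun u hu => hUA u (Finset.mem_insert_of_mem hu)))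
    have hBA : B ⊆ A := hUA u₀ (Finset.mem_insert_self _ _)
    have hAsub' : ∀ i ∈ A, i ∈ A' ∨ i ∈ B := by
      intro i hi
      rcases hAsub i hi with h | h
      · exact Or.inl (Finset.mem_union_left _ h)
      · rw [Finset.biUnion_insert, Finset.mem_union] at h
        rcases h with h | h
        · exact Or.inr h
        · exact Or.inl (Finset.mem_union_right _ h)
    have hSCv : S ⊆ C v := by rw [hSdef, hpar0]; exact Finset.inter_subset_right
    have hSB : S ⊆ B :=
      Finset.inter_subset_left.trans (Finset.subset_biUnion_of_mem C (subtree_self u₀))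
    have hA'B_sub : ∀ i ∈ A', i ∈ B → i ∈ S := by
      intro i hiA' hiB
      obtain ⟨w₀, hw₀, hiw₀⟩ := Finset.mem_biUnion.mp hiB
      rw [hSdef, hpar0]
      rcases Finset.mem_union.mp hiA' with hiCv | hiW
      · exact Finset.mem_inter.mpr
          ⟨rip_child hroot hdepth hrip hu₀c hw₀ (Finset.mem_inter.mpr ⟨hiw₀, hiCv⟩), hiCv⟩
      · obtain ⟨u, hu, hiu⟩ := Finset.mem_biUnion.mp hiW
        obtain ⟨w, hw, hiw⟩ := Finset.mem_biUnion.mp hiu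
        have hneu : u₀ ≠ u := fun h => hu₀ (h ▸ hu)
        exact rip_sep hroot hdepth hrip hu₀c (hWc hu) hneu hw₀ hw
          (Finset.mem_inter.mpr ⟨hiw₀, hiw⟩)
    set Wb := insert v (W.biUnion (subtree par)) with hWbdef
    have hverts : insert v ((insert u₀ W).biUnion (subtree par)) = Wb ∪ subtree par u₀ := by
      rw [Finset.biUnion_insert]
      ext x
      simp only [hWbdef, Finset.mem_insert, Finset.mem_union]
      tauto
    have hdisjW : Disjoint Wb (subtree par u₀) := by
      rw [Finset.disjoint_left]
      intro x hx hx0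
      rcases Finset.mem_insert.mp hx with rfl | hx'
      · exact not_mem_subtree_child hroot hdepth hu₀c hx0
      · obtain ⟨u, hu, hxu⟩ := Finset.mem_biUnion.mp hx'
        exact (Finset.disjoint_left.mp
          (subtree_disj hroot hdepth (hWc hu) hu₀c (fun h => hu₀ (h ▸ hu))) hxu) hx0
    have hCw_A' : ∀ w ∈ Wb, C w ⊆ A' := by
      intro w hw
      rcases Finset.mem_insert.mp hw with rfl | hw'
      · exact Finset.subset_union_left
      · obtain ⟨u, hu, hwu⟩ := Finset.mem_biUnion.mp hw'
        exact (Finset.subset_biUnion_of_mem C hwu).trans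
          ((Finset.subset_biUnion_of_mem (scopeJT par C) hu).trans Finset.subset_union_right)
    have hCw_B : ∀ w ∈ subtree par u₀, C w ⊆ B := fun w hw => Finset.subset_biUnion_of_mem C hw
    rw [sum_glue hA'A hBA hAsub']
    have hsummand : ∀ (a : (i : ↥A') → X i.1) (b : (i : ↥B) → X i.1),
        (if compat X a b then
          (if restr X A (C v) (glue X A' B A a b) = c then
            ∏ w ∈ insert v ((insert u₀ W).biUnion (subtree par)),
              ψ w (restr X A (C w) (glue X A' B A a b))
          else 0)
        else 0)
        = (if restr X A' (C v) a = c then (∏ w ∈ Wb, ψ w (restr X A' (C w) a)) else 0) *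
          (if restr X B S b = restr X (C v) S c then
            ∏ w ∈ subtree par u₀, ψ w (restr X B (C w) b) else 0) := by
      intro a b
      have hres : restr X A (C v) (glue X A' B A a b) = restr X A' (C v) a :=
        restr_glue_left Finset.subset_union_left hCvA a b
      by_cases h1 : restr X A' (C v) a = c
      · have hiff : compat X a b ↔ restr X B S b = restr X (C v) S c := by
          constructor
          · intro hc
            funext i
            have hiS : i.1 ∈ S := i.2
            have hiCv : i.1 ∈ C v := hSCv hiS
            have hiA' : i.1 ∈ A' := Finset.mem_union_left _ hiCv
            have hiB : i.1 ∈ B := hSB hiS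
            calc restr X B S b i = b ⟨i.1, hiB⟩ := dif_pos hiB
              _ = a ⟨i.1, hiA'⟩ := (hc i.1 hiA' hiB).symm
              _ = restr X A' (C v) a ⟨i.1, hiCv⟩ :=
                (show restr X A' (C v) a ⟨i.1, hiCv⟩ = a ⟨i.1, hiA'⟩ from dif_pos hiA').symm
              _ = c ⟨i.1, hiCv⟩ := by rw [h1]
              _ = restr X (C v) S c i :=
                (show restr X (C v) S c i = c ⟨i.1, hiCv⟩ from dif_pos hiCv).symm
          · intro hq i hiA' hiB
            have hiS : i ∈ S := hA'B_sub i hiA' hiB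
            have hiCv : i ∈ C v := hSCv hiS
            calc a ⟨i, hiA'⟩ = restr X A' (C v) a ⟨i, hiCv⟩ :=
              (show restr X A' (C v) a ⟨i, hiCv⟩ = a ⟨i, hiA'⟩ from dif_pos hiA').symm
              _ = c ⟨i, hiCv⟩ := by rw [h1]
              _ = restr X (C v) S c ⟨i, hiS⟩ :=
                (show restr X (C v) S c ⟨i, hiS⟩ = c ⟨i, hiCv⟩ from dif_pos hiCv).symm
              _ = restr X B S b ⟨i, hiS⟩ := by rw [hq]
              _ = b ⟨i, hiB⟩ := dif_pos hiB
        by_cases h2 : compat X a b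
        · rw [if_pos h2, hres, if_pos h1, if_pos h1, if_pos (hiff.mp h2)]
          rw [hverts, Finset.prod_union hdisjW]
          congr 1
          · apply Finset.prod_congr rfl
            intro w hw
            rw [restr_glue_left (hCw_A' w hw) ((hCw_A' w hw).trans hA'A)]
          · apply Finset.prod_congr rfl
            intro w hw
            rw [restr_glue_right (hCw_B w hw) ((hCw_B w hw).trans hBA) h2]
        · rw [if_neg h2, if_pos h1, if_neg (fun hq => h2 (hiff.mpr hq)), mul_zero]
      · rw [hres, if_neg h1, ite_self, if_neg h1, zero_mul]
    calc (∑ a : (i : ↥A') → X i.1, ∑ b : (i : ↥B) → X i.1,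
            if compat X a b then
              (if restr X A (C v) (glue X A' B A a b) = c then
                ∏ w ∈ insert v ((insert u₀ W).biUnion (subtree par)),
                  ψ w (restr X A (C w) (glue X A' B A a b))
              else 0)
            else 0)
        = (∑ a : (i : ↥A') → X i.1,
            if restr X A' (C v) a = c then (∏ w ∈ Wb, ψ w (restr X A' (C w) a)) else 0) *
          (∑ b : (i : ↥B) → X i.1,
            if restr X B S b = restr X (C v) S c then
              ∏ w ∈ subtree par u₀, ψ w (restr X B (C w) b) else 0) := by
          rw [Finset.sum_mul_sum]
          apply Finset.sum_congr rfl
          intro a _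
          apply Finset.sum_congr rfl
          intro b _
          exact hsummand a b
      _ = (ψ v c * ∏ u ∈ W, TT par C ψ u (restr X (C v) (C u ∩ C (par u)) c)) *
          TT par C ψ u₀ (restr X (C v) S c) := by
          congr 1
          · exact ih hWc A' Finset.subset_union_left
              (fun u hu => (Finset.subset_biUnion_of_mem (scopeJT par C) hu).trans
                Finset.subset_union_right)
              (fun i hi => by
                rcases Finset.mem_union.mp hi with h | h
                · exact Or.inl h
                · exact Or.inr h) c
      _ = ψ v c * ∏ u ∈ insert u₀ W, TT par C ψ u (restr X (C v) (C u ∩ C (par u)) c) := by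
          rw [Finset.prod_insert hu₀]
          ring

end Central


section Main

variable (hroot : par r = r) (hdepth : ∀ v : V, v ≠ r → depth (par v) < depth v)
include hroot hdepth

lemma msg_eq {C : V → Finset ι}
    (hrip : ∀ a b : V, ∀ p : (treeGraph par).Walk a b, p.IsPath →
      ∀ c ∈ p.support, C a ∩ C b ⊆ C c)
    (ψ : (v : V) → ((i : ↥(C v)) → X i.1) → R) :
    ∀ fuel (v : V), v ≠ r → (subtree par v).card ≤ fuel →
      ∀ s, msg par r C ψ fuel v s = TT par C ψ v s := by
  intro fuel
  induction fuel with
  | zero =>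
    intro v hv hcard s
    have := Finset.card_pos.mpr ⟨v, subtree_self (par := par) v⟩
    omega
  | succ n ih =>
    intro v hv hcard s
    simp only [msg]
    have hA1 : ∀ c : (i : ↥(C v)) → X i.1,
        (∏ u ∈ (children par r v).attach,
          msg par r C ψ n u.1 (fun i =>
            c ⟨i.1, by
              have hu : par u.1 = v := (Finset.mem_filter.mp u.2).2.1
              exact (congrArg C hu) ▸ (Finset.mem_of_mem_inter_right i.2)⟩))
        = ∏ u ∈ (children par r v), TT par C ψ u (restr X (C v) (C u ∩ C (par u)) c) := by
      intro c
      rw [← Finset.prod_attach (children par r v)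
        (fun u => TT par C ψ u (restr X (C v) (C u ∩ C (par u)) c))]
      apply Finset.prod_congr rfl
      intro u _
      have hu := u.2
      have hune : u.1 ≠ r := (mem_children_iff.mp hu).2
      have hpar : par u.1 = v := (mem_children_iff.mp hu).1
      have hlt : (subtree par u.1).card ≤ n := by
        have hss : subtree par u.1 ⊂ subtree par v :=
          (Finset.ssubset_iff_of_subset (child_subtree hu)).mpr
            ⟨v, subtree_self v, not_mem_subtree_child hroot hdepth hu⟩
        have := Finset.card_lt_card hss
        omega
      rw [ih u.1 hune hlt]
      congr 1
      funext i
      obtain ⟨j, hj⟩ := i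
      have hm : j ∈ C v := by
        have h2 := (Finset.mem_inter.mp hj).2
        rwa [hpar] at h2
      exact (show restr X (C v) (C u.1 ∩ C (par u.1)) c ⟨j, hj⟩ = c ⟨j, hm⟩
        from dif_pos hm).symm
    have hA2 : ∀ c : (i : ↥(C v)) → X i.1,
        (∀ i : ↥(C v ∩ C (par v)), c ⟨i.1, Finset.mem_of_mem_inter_left i.2⟩ = s i) ↔
          restr X (C v) (C v ∩ C (par v)) c = s := by
      intro c
      rw [funext_iff]
      constructor
      · intro h i
        have hm : i.1 ∈ C v := Finset.mem_of_mem_inter_left i.2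
        have e : restr X (C v) (C v ∩ C (par v)) c i = c ⟨i.1, hm⟩ := dif_pos hm
        rw [e]
        exact h i
      · intro h i
        have hm : i.1 ∈ C v := Finset.mem_of_mem_inter_left i.2
        have e : restr X (C v) (C v ∩ C (par v)) c i = c ⟨i.1, hm⟩ := dif_pos hm
        have := h i
        rw [e] at this
        exact this
    have hB1 : (∑ c : (i : ↥(C v)) → X i.1,
        if (∀ i : ↥(C v ∩ C (par v)), c ⟨i.1, Finset.mem_of_mem_inter_left i.2⟩ = s i) then
          ψ v c * ∏ u ∈ (children par r v).attach,
            msg par r C ψ n u.1 (fun i =>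
              c ⟨i.1, by
                have hu : par u.1 = v := (Finset.mem_filter.mp u.2).2.1
                exact (congrArg C hu) ▸ (Finset.mem_of_mem_inter_right i.2)⟩)
        else 0)
        = ∑ c : (i : ↥(C v)) → X i.1,
            if restr X (C v) (C v ∩ C (par v)) c = s then
              ψ v c * ∏ u ∈ (children par r v), TT par C ψ u (restr X (C v) (C u ∩ C (par u)) c)
            else 0 := by
      apply Finset.sum_congr rfl
      intro c _
      rw [hA1 c]
      exact if_congr (hA2 c) rfl rfl
    rw [hB1]
    have hCv_scope : C v ⊆ scopeJT par C v := Finset.subset_biUnion_of_mem C (subtree_self v)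
    have hscope_u : ∀ u ∈ children par r v, scopeJT par C u ⊆ scopeJT par C v := fun u hu =>
      Finset.biUnion_subset_biUnion_of_subset_left C (child_subtree hu)
    have hscope_sub : ∀ i ∈ scopeJT par C v,
        i ∈ C v ∨ i ∈ (children par r v).biUnion (scopeJT par C) := by
      intro i hi
      obtain ⟨w, hw, hiw⟩ := Finset.mem_biUnion.mp hi
      rcases subtree_cases hroot hdepth hw with rfl | ⟨u, hu, hw'⟩
      · exact Or.inl hiw
      · exact Or.inr (Finset.mem_biUnion.mpr ⟨u, hu, Finset.mem_biUnion.mpr ⟨w, hw', hiw⟩⟩)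
    have hverts : insert v ((children par r v).biUnion (subtree par)) = subtree par v := by
      ext x
      simp only [Finset.mem_insert, Finset.mem_biUnion]
      constructor
      · rintro (rfl | ⟨u, hu, hx⟩)
        · exact subtree_self x
        · exact child_subtree hu hx
      · intro hx
        rcases subtree_cases hroot hdepth hx with rfl | ⟨u, hu, hx'⟩
        · exact Or.inl rfl
        · exact Or.inr ⟨u, hu, hx'⟩
    have hcen := central hroot hdepth hrip ψ v (children par r v) (le_refl _)
      (scopeJT par C v) hCv_scope hscope_u hscope_sub
    rw [hverts] at hcen
    calc (∑ c : (i : ↥(C v)) → X i.1,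
            if restr X (C v) (C v ∩ C (par v)) c = s then
              ψ v c * ∏ u ∈ (children par r v), TT par C ψ u (restr X (C v) (C u ∩ C (par u)) c)
            else 0)
        = ∑ c : (i : ↥(C v)) → X i.1,
            ∑ y : (i : ↥(scopeJT par C v)) → X i.1,
              if restr X (C v) (C v ∩ C (par v)) c = s then
                (if restr X (scopeJT par C v) (C v) y = c then
                  ∏ w ∈ subtree par v, ψ w (restr X (scopeJT par C v) (C w) y) else 0)
              else 0 := by
          apply Finset.sum_congr rfl
          intro c _
          split_ifs with h
          · exact (hcen c).symm
          · exact Finset.sum_const_zero.symm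
      _ = ∑ y : (i : ↥(scopeJT par C v)) → X i.1,
            ∑ c : (i : ↥(C v)) → X i.1,
              if restr X (scopeJT par C v) (C v) y = c then
                (if restr X (C v) (C v ∩ C (par v)) c = s then
                  ∏ w ∈ subtree par v, ψ w (restr X (scopeJT par C v) (C w) y) else 0)
              else 0 := by
          rw [Finset.sum_comm]
          apply Finset.sum_congr rfl
          intro y _
          apply Finset.sum_congr rfl
          intro c _
          exact ite_swap _
      _ = TT par C ψ v s := by
          apply Finset.sum_congr rfl
          intro y _
          rw [Fintype.sum_ite_eq (restr X (scopeJT par C v) (C v) y)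
            (fun c => if restr X (C v) (C v ∩ C (par v)) c = s then
              ∏ w ∈ subtree par v, ψ w (restr X (scopeJT par C v) (C w) y) else 0)]
          rw [restr_restr hCv_scope Finset.inter_subset_left]

end Main

end JT

/-- Correctness of junction-tree message passing over an arbitrary commutative
semiring (the tree-like SPF construction underlying Corollary 1): if the rooted
tree `(T, C)` covers all the variables and satisfies the running intersection
property (for all vertices `u`, `w` and every `v` on the unique path between
them, `C u ∩ C w ⊆ C v`), then the bottom-up message passing value `Z` equals
the sum over all full assignments of the product of all cluster functions. -/
theorem junction_tree_message_passing
    (par : V → V) (r : V) (depth : V → ℕ)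
    (hroot : par r = r)
    (hdepth : ∀ v : V, v ≠ r → depth (par v) < depth v)
    (C : V → Finset ι)
    (hcover : Finset.univ.biUnion C = (Finset.univ : Finset ι))
    (hrip : ∀ u w : V, ∀ p : (treeGraph par).Walk u w, p.IsPath →
      ∀ v ∈ p.support, C u ∩ C w ⊆ C v)
    (ψ : (v : V) → ((i : ↥(C v)) → X i.1) → R) :
    rootSum par r C ψ =
      ∑ x : (i : ι) → X i, ∏ v : V, ψ v (fun i => x i.1) := by
  classical
  have hrip' : ∀ a b : V, ∀ p : (treeGraph par).Walk a b, p.IsPath →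
      ∀ c ∈ p.support, C a ∩ C b ⊆ C c := hrip
  have hscope_r : JT.scopeJT par C r = Finset.univ := by
    simp only [JT.scopeJT, JT.subtree_root hroot hdepth, hcover]
  simp only [rootSum]
  have hA1 : ∀ c : (i : ↥(C r)) → X i.1,
      (∏ u ∈ (children par r r).attach,
        msg par r C ψ (Fintype.card V) u.1 (fun i =>
          c ⟨i.1, by
            have hu : par u.1 = r := (Finset.mem_filter.mp u.2).2.1
            exact (congrArg C hu) ▸ (Finset.mem_of_mem_inter_right i.2)⟩))
      = ∏ u ∈ (children par r r), JT.TT par C ψ u (JT.restr X (C r) (C u ∩ C (par u)) c) := by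
    intro c
    rw [← Finset.prod_attach (children par r r)
      (fun u => JT.TT par C ψ u (JT.restr X (C r) (C u ∩ C (par u)) c))]
    apply Finset.prod_congr rfl
    intro u _
    have hu := u.2
    have hune : u.1 ≠ r := (JT.mem_children_iff.mp hu).2
    have hpar : par u.1 = r := (JT.mem_children_iff.mp hu).1
    rw [JT.msg_eq hroot hdepth hrip' ψ (Fintype.card V) u.1 hune (Finset.card_le_univ _)]
    congr 1
    funext i
    obtain ⟨j, hj⟩ := i
    have hm : j ∈ C r := by
      have h2 := (Finset.mem_inter.mp hj).2
      rwa [hpar] at h2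
    exact (show JT.restr X (C r) (C u.1 ∩ C (par u.1)) c ⟨j, hj⟩ = c ⟨j, hm⟩
      from dif_pos hm).symm
  have hCv_scope : C r ⊆ JT.scopeJT par C r :=
    Finset.subset_biUnion_of_mem C (JT.subtree_self r)
  have hscope_u : ∀ u ∈ children par r r, JT.scopeJT par C u ⊆ JT.scopeJT par C r := fun u hu =>
    Finset.biUnion_subset_biUnion_of_subset_left C (JT.child_subtree hu)
  have hscope_sub : ∀ i ∈ JT.scopeJT par C r,
      i ∈ C r ∨ i ∈ (children par r r).biUnion (JT.scopeJT par C) := by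
    intro i hi
    obtain ⟨w, hw, hiw⟩ := Finset.mem_biUnion.mp hi
    rcases JT.subtree_cases hroot hdepth hw with rfl | ⟨u, hu, hw'⟩
    · exact Or.inl hiw
    · exact Or.inr (Finset.mem_biUnion.mpr ⟨u, hu, Finset.mem_biUnion.mpr ⟨w, hw', hiw⟩⟩)
  have hverts : insert r ((children par r r).biUnion (JT.subtree par)) = JT.subtree par r := by
    ext x
    simp only [Finset.mem_insert, Finset.mem_biUnion]
    constructor
    · rintro (rfl | ⟨u, hu, hx⟩)
      · exact JT.subtree_self x
      · exact JT.child_subtree hu hx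
    · intro hx
      rcases JT.subtree_cases hroot hdepth hx with rfl | ⟨u, hu, hx'⟩
      · exact Or.inl rfl
      · exact Or.inr ⟨u, hu, hx'⟩
  have hcen := JT.central hroot hdepth hrip' ψ r (children par r r) (le_refl _)
    (JT.scopeJT par C r) hCv_scope hscope_u hscope_sub
  rw [hverts] at hcen
  calc (∑ c : (i : ↥(C r)) → X i.1,
          ψ r c * ∏ u ∈ (children par r r).attach,
            msg par r C ψ (Fintype.card V) u.1 (fun i =>
              c ⟨i.1, by
                have hu : par u.1 = r := (Finset.mem_filter.mp u.2).2.1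
                exact (congrArg C hu) ▸ (Finset.mem_of_mem_inter_right i.2)⟩))
      = ∑ c : (i : ↥(C r)) → X i.1,
          ψ r c * ∏ u ∈ (children par r r), JT.TT par C ψ u (JT.restr X (C r) (C u ∩ C (par u)) c) := by
        apply Finset.sum_congr rfl
        intro c _
        rw [hA1 c]
    _ = ∑ c : (i : ↥(C r)) → X i.1,
          ∑ y : (i : ↥(JT.scopeJT par C r)) → X i.1,
            if JT.restr X (JT.scopeJT par C r) (C r) y = c then
              ∏ w ∈ JT.subtree par r, ψ w (JT.restr X (JT.scopeJT par C r) (C w) y)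
            else 0 := by
        apply Finset.sum_congr rfl
        intro c _
        exact (hcen c).symm
    _ = ∑ y : (i : ↥(JT.scopeJT par C r)) → X i.1,
          ∑ c : (i : ↥(C r)) → X i.1,
            if JT.restr X (JT.scopeJT par C r) (C r) y = c then
              ∏ w ∈ JT.subtree par r, ψ w (JT.restr X (JT.scopeJT par C r) (C w) y)
            else 0 := Finset.sum_comm
    _ = ∑ y : (i : ↥(JT.scopeJT par C r)) → X i.1,
          ∏ w ∈ JT.subtree par r, ψ w (JT.restr X (JT.scopeJT par C r) (C w) y) := by
        apply Finset.sum_congr rfl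
        intro y _
        exact Fintype.sum_ite_eq (JT.restr X (JT.scopeJT par C r) (C r) y)
          (fun _ => ∏ w ∈ JT.subtree par r, ψ w (JT.restr X (JT.scopeJT par C r) (C w) y))
    _ = ∑ x : (i : ι) → X i,
          ∏ w ∈ JT.subtree par r, ψ w (JT.restr X (JT.scopeJT par C r) (C w) (fun i => x i.1)) :=
        JT.sum_asg (JT.scopeJT par C r) (fun i => by rw [hscope_r]; exact Finset.mem_univ i) _
    _ = ∑ x : (i : ι) → X i, ∏ v : V, ψ v (fun i => x i.1) := by
        apply Finset.sum_congr rfl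
        intro x _
        rw [JT.subtree_root hroot hdepth]
        apply Finset.prod_congr rfl
        intro w _
        congr 1
        funext i
        have hm : i.1 ∈ JT.scopeJT par C r := by rw [hscope_r]; exact Finset.mem_univ _
        exact dif_pos hm


end JunctionTree
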